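/- Let k be a commutative ring with distinguished elements x, y, let m ≥ 3 be odd, and suppose the two-colored quantum number [m]x = 0 (for m odd, [m]x = [m]y). Then [m−1]x · [m−1]y = 1, and x and y are invertible in k. -/

import Mathlib

/-- The pair of two-colored quantum numbers `([n]x, [n]y)` attached to `x, y ∈ k`:
`[0]x = [0]y = 0`, `[1]x = [1]y = 1`, `[n+1]x = x·[n]y − [n−1]x`,
`[n+1]y = y·[n]x − [n−1]y`. -/
def tq {k : Type*} [CommRing k] (x y : k) : ℕ → k × k
  | 0 => (0, 0)
  | 1 => (1, 1)
  | n + 2 => (x * (tq x y (n + 1)).2 - (tq x y n).1,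
              y * (tq x y (n + 1)).1 - (tq x y n).2)

/-- The two-colored quantum number `[n]x`. -/
def qnx {k : Type*} [CommRing k] (x y : k) (n : ℕ) : k := (tq x y n).1

/-- The two-colored quantum number `[n]y`. -/
def qny {k : Type*} [CommRing k] (x y : k) (n : ℕ) : k := (tq x y n).2

lemma qnx_zero {k : Type*} [CommRing k] (x y : k) : qnx x y 0 = 0 := rfl
lemma qny_zero {k : Type*} [CommRing k] (x y : k) : qny x y 0 = 0 := rfl
lemma qnx_one {k : Type*} [CommRing k] (x y : k) : qnx x y 1 = 1 := rfl
lemma qny_one {k : Type*} [CommRing k] (x y : k) : qny x y 1 = 1 := rfl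
lemma qnx_add_two {k : Type*} [CommRing k] (x y : k) (n : ℕ) :
    qnx x y (n + 2) = x * qny x y (n + 1) - qnx x y n := rfl
lemma qny_add_two {k : Type*} [CommRing k] (x y : k) (n : ℕ) :
    qny x y (n + 2) = y * qnx x y (n + 1) - qny x y n := rfl

/-- The determinant-type invariant, in both mirror forms. -/
lemma tq_invariant {k : Type*} [CommRing k] (x y : k) :
    ∀ n : ℕ, qnx x y (n + 1) * qny x y (n + 1) - qnx x y (n + 2) * qny x y n = 1 ∧
      qnx x y (n + 1) * qny x y (n + 1) - qny x y (n + 2) * qnx x y n = 1 := by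
  intro n
  induction n with
  | zero => simp [qnx_zero, qny_zero, qnx_one, qny_one]
  | succ n ih =>
    obtain ⟨h1, h2⟩ := ih
    constructor
    · show qnx x y (n + 2) * qny x y (n + 2) - qnx x y (n + 3) * qny x y (n + 1) = 1
      linear_combination h2 + qny x y (n + 2) * (qnx_add_two x y n) -
        qny x y (n + 1) * (qnx_add_two x y (n + 1))
    · show qnx x y (n + 2) * qny x y (n + 2) - qny x y (n + 3) * qnx x y (n + 1) = 1
      linear_combination h1 + qnx x y (n + 2) * (qny_add_two x y n) -
        qnx x y (n + 1) * (qny_add_two x y (n + 1))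

lemma dvd_even {k : Type*} [CommRing k] (x y : k) :
    ∀ j : ℕ, x ∣ qnx x y (2 * j) ∧ y ∣ qny x y (2 * j) := by
  intro j
  induction j with
  | zero => simp [qnx_zero, qny_zero]
  | succ j ih =>
    obtain ⟨h1, h2⟩ := ih
    have e : 2 * (j + 1) = 2 * j + 2 := by ring
    rw [e, qnx_add_two, qny_add_two]
    exact ⟨dvd_sub (Dvd.intro _ rfl) h1, dvd_sub (Dvd.intro _ rfl) h2⟩

/-- If `m ≥ 3` is odd and `[m]x = 0` (for odd `m`, `[m]x = [m]y`), then
`[m−1]x · [m−1]y = 1` and `x` and `y` are invertible in `k`. -/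
theorem odd_vanishing_invertibility {k : Type*} [CommRing k] (x y : k) (m : ℕ)
    (hm : 3 ≤ m) (hodd : Odd m) (h0 : qnx x y m = 0) :
    qnx x y (m - 1) * qny x y (m - 1) = 1 ∧ IsUnit x ∧ IsUnit y := by
  obtain ⟨j, rfl⟩ := hodd
  have hj : 1 ≤ j := by omega
  have key := (tq_invariant x y (2 * j - 1)).1
  have e2 : 2 * j - 1 + 2 = 2 * j + 1 := by omega
  have e3 : 2 * j - 1 + 1 = 2 * j := by omega
  rw [e2, e3, h0] at key
  have hmain : qnx x y (2 * j) * qny x y (2 * j) = 1 := by linear_combination key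
  have e1 : 2 * j + 1 - 1 = 2 * j := by omega
  rw [e1]
  refine ⟨hmain, ?_, ?_⟩
  · obtain ⟨c, hc⟩ := (dvd_even x y j).1
    exact IsUnit.of_mul_eq_one (a := x) (c * qny x y (2 * j)) (by rw [← mul_assoc, ← hc, hmain])
  · obtain ⟨c, hc⟩ := (dvd_even x y j).2
    exact IsUnit.of_mul_eq_one (a := y) (c * qnx x y (2 * j)) (by
      rw [← mul_assoc, ← hc, mul_comm, hmain])
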